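/- Let l, k > 0 and d ≥ 0. Define, for v ∈ (0, k), h(v) = 1 + (m(v) + (4dlv − k((d+l)² + k²))·√(m(v))) / (8k²l²(k−v)v), where m(v) = 16l²(d²+k²)v² − 8lk(dk² + d³ + 2ld² + l²d + 2k²l)v + k²(2dl + l² + d² + k²)². Set v_ε = (1/2)·k·((d+l)² + k²)/(k² + d² + l²). Then v_ε ∈ (0, k) and h attains a strict global maximum on (0, k) at v_ε; that is, for every v ∈ (0, k) with v ≠ v_ε, h(v) < h(v_ε). (Since h(v) = b²/a² for the inscribed ellipse Ψ_v and the eccentricity is √(1 − b²/a²), this says there is a unique ellipse of minimal eccentricity inscribed in the parallelogram with vertices (0,0), (l,0), (d,k), (l+d,k).) -/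

import Mathlib

set_option maxHeartbeats 1600000 in
theorem stmt_6 (l k d : ℝ) (hl : 0 < l) (hk : 0 < k) (hd : 0 ≤ d)
    (m h : ℝ → ℝ)
    (hm : ∀ v, m v = 16 * l ^ 2 * (d ^ 2 + k ^ 2) * v ^ 2
      - 8 * l * k * (d * k ^ 2 + d ^ 3 + 2 * l * d ^ 2 + l ^ 2 * d + 2 * k ^ 2 * l) * v
      + k ^ 2 * (2 * d * l + l ^ 2 + d ^ 2 + k ^ 2) ^ 2)
    (hh : ∀ v ∈ Set.Ioo (0 : ℝ) k,
      h v = 1 + (m v + (4 * d * l * v - k * ((d + l) ^ 2 + k ^ 2)) * Real.sqrt (m v))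
        / (8 * k ^ 2 * l ^ 2 * (k - v) * v))
    (vε : ℝ) (hvε : vε = 1 / 2 * k * ((d + l) ^ 2 + k ^ 2) / (k ^ 2 + d ^ 2 + l ^ 2)) :
    vε ∈ Set.Ioo (0 : ℝ) k ∧
    ∀ v ∈ Set.Ioo (0 : ℝ) k, v ≠ vε → h v < h vε := by
  have hN : (0:ℝ) < k ^ 2 + d ^ 2 + l ^ 2 := by positivity
  have hC : (0:ℝ) < (d + l) ^ 2 + k ^ 2 := by positivity
  have hQ : (0:ℝ) < (d - l) ^ 2 + k ^ 2 := by positivity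
  have hv1 : 0 < vε := by rw [hvε]; positivity
  have hv2 : vε < k := by
    rw [hvε, div_lt_iff₀ hN]
    nlinarith [sq_nonneg (d - l)]
  have hvmem : vε ∈ Set.Ioo (0:ℝ) k := ⟨hv1, hv2⟩
  refine ⟨hvmem, ?_⟩
  -- m is nonnegative everywhere
  have hmnn : ∀ v : ℝ, 0 ≤ m v := by
    intro v
    have h1 : 64 * l ^ 2 * (d ^ 2 + k ^ 2) * m v
        = (32 * l ^ 2 * (d ^ 2 + k ^ 2) * v
            - 8 * l * k * (d * k ^ 2 + d ^ 3 + 2 * l * d ^ 2 + l ^ 2 * d + 2 * k ^ 2 * l)) ^ 2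
          + 64 * l ^ 2 * k ^ 4 * (d ^ 2 + k ^ 2 - l ^ 2) ^ 2 := by
      rw [hm]; ring
    have h2 : 0 ≤ 64 * l ^ 2 * (d ^ 2 + k ^ 2) * m v := by rw [h1]; positivity
    have hp : (0:ℝ) < 64 * l ^ 2 * (d ^ 2 + k ^ 2) := by positivity
    nlinarith [h2, hp]
  -- B v := k*C - 4*d*l*v is positive on (0,k)
  have hB : ∀ v ∈ Set.Ioo (0:ℝ) k, 0 < k * ((d + l) ^ 2 + k ^ 2) - 4 * d * l * v := by
    intro v hv
    obtain ⟨hv0, hvk⟩ := hv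
    nlinarith [sq_nonneg (d - l), mul_nonneg (mul_nonneg hd hl.le) (sub_pos.2 hvk).le,
      pow_pos hk 3]
  -- closed form for h on (0,k)
  have hform : ∀ v ∈ Set.Ioo (0:ℝ) k,
      h v = (k * ((d + l) ^ 2 + k ^ 2) - 4 * d * l * v - Real.sqrt (m v))
        / (k * ((d + l) ^ 2 + k ^ 2) - 4 * d * l * v + Real.sqrt (m v)) := by
    intro v hv
    obtain ⟨hv0, hvk⟩ := hv
    have hs0 : 0 ≤ Real.sqrt (m v) := Real.sqrt_nonneg _
    have hs2 : Real.sqrt (m v) ^ 2 = m v := Real.sq_sqrt (hmnn v)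
    have hBv := hB v ⟨hv0, hvk⟩
    have hden : 0 < k * ((d + l) ^ 2 + k ^ 2) - 4 * d * l * v + Real.sqrt (m v) := by
      linarith
    have hDn : (0:ℝ) < 8 * k ^ 2 * l ^ 2 * (k - v) * v := by
      have h1 : (0:ℝ) < 8 * k ^ 2 * l ^ 2 := by positivity
      have h2 : (0:ℝ) < k - v := sub_pos.2 hvk
      positivity
    rw [hh v ⟨hv0, hvk⟩]
    set s := Real.sqrt (m v) with hsdef
    have hpoly : s ^ 2 = 16 * l ^ 2 * (d ^ 2 + k ^ 2) * v ^ 2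
      - 8 * l * k * (d * k ^ 2 + d ^ 3 + 2 * l * d ^ 2 + l ^ 2 * d + 2 * k ^ 2 * l) * v
      + k ^ 2 * (2 * d * l + l ^ 2 + d ^ 2 + k ^ 2) ^ 2 := hs2.trans (hm v)
    rw [show m v = s ^ 2 from hs2.symm, eq_div_iff (ne_of_gt hden)]
    field_simp
    linear_combination s * hpoly
  -- main comparison
  intro v hv hvne
  obtain ⟨hv0, hvk⟩ := hv
  have hB1 := hB v ⟨hv0, hvk⟩
  have hB2 := hB vε hvmem
  have hs10 : 0 ≤ Real.sqrt (m v) := Real.sqrt_nonneg _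
  have hs20 : 0 ≤ Real.sqrt (m vε) := Real.sqrt_nonneg _
  have hs12 : Real.sqrt (m v) ^ 2 = m v := Real.sq_sqrt (hmnn v)
  have hs22 : Real.sqrt (m vε) ^ 2 = m vε := Real.sq_sqrt (hmnn vε)
  -- closed forms at vε
  have e1 : (k ^ 2 + d ^ 2 + l ^ 2) * (k * ((d + l) ^ 2 + k ^ 2) - 4 * d * l * vε)
      = k * ((d + l) ^ 2 + k ^ 2) * ((d - l) ^ 2 + k ^ 2) := by
    rw [hvε]; field_simp; ring
  have e2 : (k ^ 2 + d ^ 2 + l ^ 2) ^ 2 * m vε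
      = k ^ 2 * ((d + l) ^ 2 + k ^ 2) * ((d - l) ^ 2 + k ^ 2) * (d ^ 2 + k ^ 2 - l ^ 2) ^ 2 := by
    rw [hm, hvε]; field_simp; ring
  -- v is away from the critical point
  have hT : 2 * (k ^ 2 + d ^ 2 + l ^ 2) * v - k * ((d + l) ^ 2 + k ^ 2) ≠ 0 := by
    intro h0
    apply hvne
    rw [hvε]
    field_simp
    linarith
  have hT2 : 0 < (2 * (k ^ 2 + d ^ 2 + l ^ 2) * v - k * ((d + l) ^ 2 + k ^ 2)) ^ 2 :=
    lt_of_le_of_ne (sq_nonneg _) (Ne.symm (pow_ne_zero 2 hT))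
  -- core polynomial identity
  have iden : ((d + l) ^ 2 + k ^ 2) * ((d - l) ^ 2 + k ^ 2) * m v
      - (d ^ 2 + k ^ 2 - l ^ 2) ^ 2 * (k * ((d + l) ^ 2 + k ^ 2) - 4 * d * l * v) ^ 2
      = 4 * l ^ 2 * k ^ 2 * (2 * (k ^ 2 + d ^ 2 + l ^ 2) * v - k * ((d + l) ^ 2 + k ^ 2)) ^ 2 := by
    rw [hm]; ring
  -- strict inequality on squares
  have hsq : (k * ((d + l) ^ 2 + k ^ 2) - 4 * d * l * v) ^ 2 * m vε
      < (k * ((d + l) ^ 2 + k ^ 2) - 4 * d * l * vε) ^ 2 * m v := by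
    have hN2 : (0:ℝ) < (k ^ 2 + d ^ 2 + l ^ 2) ^ 2 := by positivity
    have key : (k ^ 2 + d ^ 2 + l ^ 2) ^ 2 *
        ((k * ((d + l) ^ 2 + k ^ 2) - 4 * d * l * vε) ^ 2 * m v
          - (k * ((d + l) ^ 2 + k ^ 2) - 4 * d * l * v) ^ 2 * m vε)
        = k ^ 2 * ((d + l) ^ 2 + k ^ 2) * ((d - l) ^ 2 + k ^ 2) *
          (((d + l) ^ 2 + k ^ 2) * ((d - l) ^ 2 + k ^ 2) * m v
            - (d ^ 2 + k ^ 2 - l ^ 2) ^ 2 * (k * ((d + l) ^ 2 + k ^ 2) - 4 * d * l * v) ^ 2) := by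
      have e1' : (k * ((d + l) ^ 2 + k ^ 2) - 4 * d * l * vε)
          = k * ((d + l) ^ 2 + k ^ 2) * ((d - l) ^ 2 + k ^ 2) / (k ^ 2 + d ^ 2 + l ^ 2) := by
        rw [eq_div_iff (ne_of_gt hN)]; linarith [e1]
      rw [e1']
      have e2' : m vε = k ^ 2 * ((d + l) ^ 2 + k ^ 2) * ((d - l) ^ 2 + k ^ 2) *
          (d ^ 2 + k ^ 2 - l ^ 2) ^ 2 / (k ^ 2 + d ^ 2 + l ^ 2) ^ 2 := by
        rw [eq_div_iff (ne_of_gt hN2)]; linarith [e2]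
      rw [e2']
      field_simp
    have hpos : 0 < k ^ 2 * ((d + l) ^ 2 + k ^ 2) * ((d - l) ^ 2 + k ^ 2) *
        (((d + l) ^ 2 + k ^ 2) * ((d - l) ^ 2 + k ^ 2) * m v
          - (d ^ 2 + k ^ 2 - l ^ 2) ^ 2 * (k * ((d + l) ^ 2 + k ^ 2) - 4 * d * l * v) ^ 2) := by
      rw [iden]
      have : (0:ℝ) < k ^ 2 * ((d + l) ^ 2 + k ^ 2) * ((d - l) ^ 2 + k ^ 2) := by positivity
      have h4 : (0:ℝ) < 4 * l ^ 2 * k ^ 2 := by positivity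
      exact mul_pos this (mul_pos h4 hT2)
    rw [← key] at hpos
    have h6 := div_pos hpos hN2
    rwa [mul_div_cancel_left₀ _ (ne_of_gt hN2), sub_pos] at h6
  -- take square roots
  have hlt : (k * ((d + l) ^ 2 + k ^ 2) - 4 * d * l * v) * Real.sqrt (m vε)
      < (k * ((d + l) ^ 2 + k ^ 2) - 4 * d * l * vε) * Real.sqrt (m v) := by
    apply lt_of_pow_lt_pow_left₀ 2 (mul_nonneg hB2.le hs10)
    calc ((k * ((d + l) ^ 2 + k ^ 2) - 4 * d * l * v) * Real.sqrt (m vε)) ^ 2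
        = (k * ((d + l) ^ 2 + k ^ 2) - 4 * d * l * v) ^ 2 * m vε := by
          rw [mul_pow, hs22]
      _ < (k * ((d + l) ^ 2 + k ^ 2) - 4 * d * l * vε) ^ 2 * m v := hsq
      _ = ((k * ((d + l) ^ 2 + k ^ 2) - 4 * d * l * vε) * Real.sqrt (m v)) ^ 2 := by
          rw [mul_pow, hs12]
  rw [hform v ⟨hv0, hvk⟩, hform vε hvmem]
  rw [div_lt_div_iff₀ (by linarith) (by linarith)]
  nlinarith [hlt]
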